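/- Let d ≥ 1, let μ be any real number, and let θ be a smooth, strictly positive, ℤ^d-periodic function on ℝ^d. Then (μ^2/3) ∫_{𝕋^d} θ^{μ-1} |∇θ|^4 dx ≤ ∫_{𝕋^d} θ^{μ+1} (Δθ)^2 dx + 2 ∫_{𝕋^d} θ^{μ+1} |∇∇θ|^2 dx. -/

import Mathlib

open MeasureTheory Real

/-- Partial derivative `∂ᵢ f` of a function on `ℝᵈ` (as `EuclideanSpace`). -/
noncomputable def pder {d : ℕ} (i : Fin d) (f : EuclideanSpace ℝ (Fin d) → ℝ)
    (x : EuclideanSpace ℝ (Fin d)) : ℝ :=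
  fderiv ℝ f x (EuclideanSpace.single i 1)

/-- The Laplacian `Δ f = ∑ᵢ ∂ᵢ∂ᵢ f`. -/
noncomputable def lap {d : ℕ} (f : EuclideanSpace ℝ (Fin d) → ℝ)
    (x : EuclideanSpace ℝ (Fin d)) : ℝ :=
  ∑ i, pder i (pder i f) x

/-- Squared norm of the gradient, `|∇f|² = ∑ᵢ (∂ᵢ f)²`. -/
noncomputable def gradSq {d : ℕ} (f : EuclideanSpace ℝ (Fin d) → ℝ)
    (x : EuclideanSpace ℝ (Fin d)) : ℝ :=
  ∑ i, (pder i f x) ^ 2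

/-- Squared Frobenius norm of the Hessian, `|∇∇f|² = ∑ᵢⱼ (∂ᵢ∂ⱼ f)²`. -/
noncomputable def hessSq {d : ℕ} (f : EuclideanSpace ℝ (Fin d) → ℝ)
    (x : EuclideanSpace ℝ (Fin d)) : ℝ :=
  ∑ i, ∑ j, (pder i (pder j f) x) ^ 2

/-- The fundamental domain `[0,1)^d` of the torus `𝕋^d`. -/
def fundDom (d : ℕ) : Set (EuclideanSpace ℝ (Fin d)) :=
  {x | ∀ i, 0 ≤ x i ∧ x i < 1}

/-- `ℤ^d`-periodicity of a function on `ℝ^d`. -/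
def ZPeriodic {d : ℕ} (f : EuclideanSpace ℝ (Fin d) → ℝ) : Prop :=
  ∀ (x : EuclideanSpace ℝ (Fin d)) (k : Fin d → ℤ),
    f (x + (WithLp.equiv 2 (Fin d → ℝ)).symm (fun i => (k i : ℝ))) = f x

/- ### Auxiliary lemmas -/

lemma pder_def {d : ℕ} (i : Fin d) (f : EuclideanSpace ℝ (Fin d) → ℝ) (x) :
    fderiv ℝ f x (EuclideanSpace.single i 1) = pder i f x := rfl

lemma pder_contDiff {d : ℕ} {f : EuclideanSpace ℝ (Fin d) → ℝ}
    (hf : ContDiff ℝ (⊤ : ℕ∞) f) (i : Fin d) : ContDiff ℝ (⊤ : ℕ∞) (pder i f) := by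
  have h1 : ContDiff ℝ (⊤ : ℕ∞) (fderiv ℝ f) := (contDiff_infty_iff_fderiv.1 hf).2
  exact h1.clm_apply contDiff_const

lemma pder_periodic {d : ℕ} {f : EuclideanSpace ℝ (Fin d) → ℝ}
    (hf : ContDiff ℝ (⊤ : ℕ∞) f) (hp : ZPeriodic f) (i : Fin d) : ZPeriodic (pder i f) := by
  intro x k
  set c := (WithLp.equiv 2 (Fin d → ℝ)).symm (fun i => (k i : ℝ))
  have hfe : (fun y => f (y + c)) = f := funext fun y => hp y k
  have h1 : HasFDerivAt (fun y => f (y + c)) (fderiv ℝ f (x + c)) x := by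
    have := ((hf.differentiable (by simp) (x + c)).hasFDerivAt).comp x
      ((hasFDerivAt_id x).add_const c)
    exact this
  have h2 : fderiv ℝ f x = fderiv ℝ f (x + c) := by
    rw [← h1.fderiv]; congr 1; exact hfe.symm ▸ rfl
  simp only [pder, h2]

lemma integral_pder_eq_zero {n : ℕ} (i : Fin (n + 1)) {g : EuclideanSpace ℝ (Fin (n + 1)) → ℝ}
    (hg : ContDiff ℝ (⊤ : ℕ∞) g) (hp : ZPeriodic g) :
    ∫ x in fundDom (n + 1), pder i g x = 0 := by
  classical
  have hgdiff : Differentiable ℝ g := hg.differentiable (by simp)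
  set L : (Fin (n + 1) → ℝ) →L[ℝ] EuclideanSpace ℝ (Fin (n + 1)) :=
    ((PiLp.continuousLinearEquiv 2 ℝ (fun _ : Fin (n + 1) => ℝ)).symm).toContinuousLinearMap with hL
  have hLapp : ∀ y, L y = (WithLp.equiv 2 (Fin (n + 1) → ℝ)).symm y := fun _ => rfl
  set S : Set (Fin (n + 1) → ℝ) := {y | ∀ j, 0 ≤ y j ∧ y j < 1} with hS
  -- Step 1: transfer to the pi space
  have step1 : ∫ x in fundDom (n + 1), pder i g x
      = ∫ y in S, pder i g ((WithLp.equiv 2 (Fin (n + 1) → ℝ)).symm y) := by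
    have h := (EuclideanSpace.volume_preserving_symm_measurableEquiv_toLp (Fin (n + 1))).setIntegral_preimage_emb
      (MeasurableEquiv.toLp 2 (Fin (n + 1) → ℝ)).symm.measurableEmbedding
      (fun y => pder i g ((WithLp.equiv 2 (Fin (n + 1) → ℝ)).symm y)) S
    rw [← h]
    rfl
  -- Step 2: S is a.e. equal to Icc 0 1
  have step2 : ∫ y in S, pder i g ((WithLp.equiv 2 (Fin (n + 1) → ℝ)).symm y)
      = ∫ y in Set.Icc (0 : Fin (n + 1) → ℝ) 1, pder i g ((WithLp.equiv 2 (Fin (n + 1) → ℝ)).symm y) := by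
    refine setIntegral_congr_set ?_
    rw [Filter.eventuallyEq_set]
    have hnull : volume (⋃ j : Fin (n + 1), {y : Fin (n + 1) → ℝ | y j = 1}) = 0 := by
      refine measure_iUnion_null fun j => ?_
      have h2 : {y : Fin (n + 1) → ℝ | y j = 1} = Function.eval j ⁻¹' {1} := rfl
      rw [h2, volume_pi]
      exact Measure.pi_hyperplane (fun _ => volume) j 1
    have hae : ∀ᵐ y : Fin (n + 1) → ℝ, y ∉ ⋃ j : Fin (n + 1), {y : Fin (n + 1) → ℝ | y j = 1} :=
      measure_eq_zero_iff_ae_notMem.mp hnull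
    refine hae.mono fun y hy => ?_
    simp only [Set.mem_iUnion, Set.mem_setOf_eq, not_exists] at hy
    constructor
    · intro h
      rw [Set.mem_Icc]
      exact ⟨fun j => (h j).1, fun j => (h j).2.le⟩
    · intro h
      rw [Set.mem_Icc] at h
      exact fun j => ⟨h.1 j, lt_of_le_of_ne (h.2 j) (hy j)⟩
  -- Step 3: divergence theorem on the box
  set G : (Fin (n + 1) → ℝ) → ℝ := fun y => g ((WithLp.equiv 2 (Fin (n + 1) → ℝ)).symm y) with hG
  set F : Fin (n + 1) → (Fin (n + 1) → ℝ) → ℝ := fun j => if j = i then G else fun _ => 0 with hF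
  set F' : Fin (n + 1) → (Fin (n + 1) → ℝ) → (Fin (n + 1) → ℝ) →L[ℝ] ℝ :=
    fun j y => if j = i then (fderiv ℝ g (L y)).comp L else 0 with hF'
  have hdivint : ∀ y, (∑ j, F' j y (Pi.single j 1))
      = pder i g ((WithLp.equiv 2 (Fin (n + 1) → ℝ)).symm y) := by
    intro y
    rw [Finset.sum_eq_single i]
    · simp only [hF', if_pos rfl, ContinuousLinearMap.comp_apply]
      rfl
    · intro j _ hj
      simp [hF', if_neg hj]
    · intro h
      exact absurd (Finset.mem_univ i) h
  have hGc : Continuous G := hg.continuous.comp (PiLp.continuous_toLp 2 (fun _ : Fin (n+1) => ℝ))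
  have hpderc : Continuous (fun y => pder i g ((WithLp.equiv 2 (Fin (n + 1) → ℝ)).symm y)) :=
    (pder_contDiff hg i).continuous.comp (PiLp.continuous_toLp 2 (fun _ : Fin (n+1) => ℝ))
  have hle : (0 : Fin (n + 1) → ℝ) ≤ 1 := zero_le_one
  have Hc : ∀ j, ContinuousOn (F j) (Set.Icc (0 : Fin (n + 1) → ℝ) 1) := by
    intro j
    by_cases hj : j = i
    · subst hj; simp only [hF, if_pos rfl]; exact hGc.continuousOn
    · simp only [hF, if_neg hj]; exact continuousOn_const
  have Hd : ∀ x ∈ (Set.pi Set.univ fun _ : Fin (n+1) => Set.Ioo (0:ℝ) 1) \ (∅ : Set (Fin (n+1) → ℝ)),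
      ∀ j, HasFDerivAt (F j) (F' j x) x := by
    intro x _ j
    by_cases hj : j = i
    · subst hj
      simp only [hF, hF', if_pos rfl]
      exact (hgdiff (L x)).hasFDerivAt.comp x L.hasFDerivAt
    · simp only [hF, hF', if_neg hj]
      exact hasFDerivAt_const 0 x
  have Hi : IntegrableOn (fun x => ∑ j, F' j x (Pi.single j 1))
      (Set.Icc (0 : Fin (n + 1) → ℝ) 1) := by
    refine (hpderc.continuousOn).integrableOn_compact isCompact_Icc |>.congr_fun ?_ measurableSet_Icc
    intro x _
    exact (hdivint x).symm
  have hthm := MeasureTheory.integral_divergence_of_hasFDerivAt_off_countable'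
    (0 : Fin (n + 1) → ℝ) 1 hle F F' ∅ Set.countable_empty Hc Hd Hi
  have hkey : ∀ y : Fin n → ℝ, G (i.insertNth (1:ℝ) y) = G (i.insertNth (0:ℝ) y) := by
    intro y
    have h1 : (i.insertNth (1:ℝ) y : Fin (n+1) → ℝ)
        = (i.insertNth (0:ℝ) y : Fin (n+1) → ℝ) + Pi.single i 1 := by
      funext j
      refine Fin.succAboveCases i ?_ ?_ j
      · simp
      · intro m
        simp [Pi.single_eq_of_ne (Fin.succAbove_ne i m)]
    have h3 : (fun j => ((Pi.single i (1:ℤ) : Fin (n+1) → ℤ) j : ℝ)) = Pi.single i (1:ℝ) := by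
      funext j
      by_cases hj : j = i
      · subst hj; simp
      · simp [Pi.single_eq_of_ne hj]
    have h2 := hp ((WithLp.equiv 2 (Fin (n+1) → ℝ)).symm (i.insertNth (0:ℝ) y)) (Pi.single i 1)
    rw [h3] at h2
    simp only [hG, h1, WithLp.toLp_add]
    exact h2
  have hRHS : (∑ j : Fin (n + 1),
      ((∫ x in Set.Icc ((0 : Fin (n+1) → ℝ) ∘ j.succAbove) ((1 : Fin (n+1) → ℝ) ∘ j.succAbove),
          F j (j.insertNth ((1 : Fin (n+1) → ℝ) j) x)) -
        ∫ x in Set.Icc ((0 : Fin (n+1) → ℝ) ∘ j.succAbove) ((1 : Fin (n+1) → ℝ) ∘ j.succAbove),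
          F j (j.insertNth ((0 : Fin (n+1) → ℝ) j) x))) = 0 := by
    refine Finset.sum_eq_zero fun j _ => ?_
    by_cases hj : j = i
    · subst hj
      simp only [hF, if_pos rfl, Pi.one_apply, Pi.zero_apply]
      rw [sub_eq_zero]
      exact setIntegral_congr_fun measurableSet_Icc fun y _ => hkey y
    · simp [hF, if_neg hj]
  rw [funext hdivint] at hthm
  rw [step1, step2, hthm, hRHS]

lemma integrableOn_fundDom {d : ℕ} {f : EuclideanSpace ℝ (Fin d) → ℝ} (hf : Continuous f) :
    IntegrableOn f (fundDom d) := by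
  have hK : IsCompact ((⇑(WithLp.equiv 2 (Fin d → ℝ)).symm) '' Set.Icc (0 : Fin d → ℝ) 1) :=
    isCompact_Icc.image (PiLp.continuous_toLp 2 (fun _ : Fin d => ℝ))
  refine (hf.continuousOn.integrableOn_compact hK).mono_set ?_
  intro x hx
  refine ⟨(WithLp.equiv 2 (Fin d → ℝ)) x, ?_, rfl⟩
  rw [Set.mem_Icc]
  exact ⟨fun j => (hx j).1, fun j => (hx j).2.le⟩

lemma le_add_of_sq_le_four_mul {X Y T : ℝ} (hX : 0 ≤ X) (hY : 0 ≤ Y) (hT : T^2 ≤ 4*(X*Y)) :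
    T ≤ X + Y := by
  nlinarith [sq_nonneg (X - Y), sq_nonneg (X + Y)]

lemma young_bound {t g l q h m μ : ℝ} (ht : 0 < t) (hg : 0 ≤ g) (hh : 0 ≤ h) (hm : 0 < m)
    (hq : q ^ 2 ≤ g ^ 2 * h) :
    m * |t ^ μ * (g * l) + 2 * (t ^ μ * q)| ≤
      m ^ 2 / 2 * (t ^ (μ - 1) * g ^ 2) + 3 / 2 * (t ^ (μ + 1) * l ^ 2)
        + 3 * (t ^ (μ + 1) * h) := by
  set a := t ^ ((μ - 1) / 2) with ha'
  set b := t ^ ((μ + 1) / 2) with hb'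
  have ha : 0 < a := rpow_pos_of_pos ht _
  have hb : 0 < b := rpow_pos_of_pos ht _
  have hab : t ^ μ = a * b := by
    rw [ha', hb', ← rpow_add ht]; ring_nf
  have ha2 : t ^ (μ - 1) = a ^ 2 := by
    rw [ha', ← rpow_natCast (t ^ ((μ - 1) / 2)) 2, ← rpow_mul ht.le]; norm_num
  have hb2 : t ^ (μ + 1) = b ^ 2 := by
    rw [hb', ← rpow_natCast (t ^ ((μ + 1) / 2)) 2, ← rpow_mul ht.le]; norm_num
  rw [hab, ha2, hb2]
  have key1 : m * (a * b * (g * l)) ≤ m ^ 2 / 2 * (a ^ 2 * g ^ 2) / 3 + 3 / 2 * (b ^ 2 * l ^ 2) := by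
    nlinarith [sq_nonneg (m * (a * g) - 3 * (b * l)), mul_pos ha hb, sq_nonneg (m*(a*g) + 3*(b*l))]
  have key1' : m * (-(a * b * (g * l))) ≤ m ^ 2 / 2 * (a ^ 2 * g ^ 2) / 3 + 3 / 2 * (b ^ 2 * l ^ 2) := by
    nlinarith [sq_nonneg (m * (a * g) + 3 * (b * l)), mul_pos ha hb]
  have key2 : ∀ q' : ℝ, q' ^ 2 ≤ g ^ 2 * h →
      m * (2 * (a * b * q')) ≤ m ^ 2 / 2 * (a ^ 2 * g ^ 2) * (2/3) + 3 * (b ^ 2 * h) := by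
    intro q' hq'
    have hX : (0:ℝ) ≤ m ^ 2 / 2 * (a ^ 2 * g ^ 2) * (2/3) := by positivity
    have hY : (0:ℝ) ≤ 3 * (b ^ 2 * h) := by positivity
    refine le_add_of_sq_le_four_mul hX hY ?_
    have h1 : (m * (2 * (a * b * q'))) ^ 2 = 4 * (m^2 * a^2 * b^2) * q' ^ 2 := by ring
    have h2 : 4 * (m^2 * a^2 * b^2) * q' ^ 2 ≤ 4 * (m^2 * a^2 * b^2) * (g^2 * h) := by
      have : (0:ℝ) ≤ 4 * (m^2 * a^2 * b^2) := by positivity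
      exact mul_le_mul_of_nonneg_left hq' this
    nlinarith [h1, h2]
  rcases abs_cases (a * b * (g * l) + 2 * (a * b * q)) with ⟨he, _⟩ | ⟨he, _⟩ <;> rw [he]
  · have h2 := key2 q hq
    have h3 : m * (a * b * (g * l) + 2 * (a * b * q))
        = m * (a * b * (g * l)) + m * (2 * (a * b * q)) := by ring
    rw [h3]
    linarith [key1, h2]
  · have hq2 : (-q) ^ 2 ≤ g ^ 2 * h := by nlinarith [hq]
    have h2 := key2 (-q) hq2
    have h3 : m * -(a * b * (g * l) + 2 * (a * b * q))
        = m * (-(a * b * (g * l))) + m * (2 * (a * b * (-q))) := by ring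
    rw [h3]
    linarith [key1', h2]

lemma Qsq_le {d : ℕ} (a : Fin d → ℝ) (b : Fin d → Fin d → ℝ) :
    (∑ i, ∑ j, a i * a j * b i j) ^ 2 ≤ (∑ i, a i ^ 2) ^ 2 * (∑ i, ∑ j, b i j ^ 2) := by
  have h := Finset.sum_mul_sq_le_sq_mul_sq Finset.univ
    (fun p : Fin d × Fin d => a p.1 * a p.2) (fun p => b p.1 p.2)
  rw [Fintype.sum_prod_type, Fintype.sum_prod_type, Fintype.sum_prod_type] at h
  calc (∑ i, ∑ j, a i * a j * b i j) ^ 2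
      ≤ (∑ i, ∑ j, (a i * a j) ^ 2) * (∑ i, ∑ j, b i j ^ 2) := h
    _ = (∑ i, a i ^ 2) ^ 2 * (∑ i, ∑ j, b i j ^ 2) := by
        congr 1
        rw [sq (∑ i, a i ^ 2), Finset.sum_mul_sum]
        exact Finset.sum_congr rfl fun i _ => Finset.sum_congr rfl fun j _ => by ring

section PointwiseDeriv

variable {d : ℕ} {θ : EuclideanSpace ℝ (Fin d) → ℝ}

lemma pder_V (hsm : ContDiff ℝ (⊤ : ℕ∞) θ) (hpos : ∀ x, 0 < θ x) (μ : ℝ) (i : Fin d)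
    (x : EuclideanSpace ℝ (Fin d)) :
    pder i (fun y => θ y ^ μ * gradSq θ y * pder i θ y) x
      = (θ x ^ μ * (∑ j, 2 * pder j θ x * pder i (pder j θ) x)
          + gradSq θ x * (μ * θ x ^ (μ - 1) * pder i θ x)) * pder i θ x
        + θ x ^ μ * gradSq θ x * pder i (pder i θ) x := by
  have hd1 : (1 : ℕ∞) ≤ (⊤ : ℕ∞) := le_top
  have hθ : HasFDerivAt θ (fderiv ℝ θ x) x :=
    ((hsm.differentiable (by simp)) x).hasFDerivAt
  have hPj : ∀ j : Fin d, HasFDerivAt (pder j θ) (fderiv ℝ (pder j θ) x) x := fun j =>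
    (((pder_contDiff hsm j).differentiable (by simp)) x).hasFDerivAt
  have hr : HasFDerivAt (fun y => θ y ^ μ) ((μ * θ x ^ (μ - 1)) • fderiv ℝ θ x) x :=
    (Real.hasDerivAt_rpow_const (p := μ) (Or.inl (hpos x).ne')).comp_hasFDerivAt x hθ
  have hGd : HasFDerivAt (gradSq θ)
      (∑ j, (2 * pder j θ x) • fderiv ℝ (pder j θ) x) x := by
    have : HasFDerivAt (fun y => ∑ j, (pder j θ y) ^ 2)
        (∑ j, (2 * pder j θ x) • fderiv ℝ (pder j θ) x) x := by
      refine HasFDerivAt.fun_sum fun j _ => ?_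
      have h := (hPj j).mul (hPj j)
      have h2 : (pder j θ * pder j θ) = fun y => (pder j θ y) ^ 2 :=
        funext fun y => (sq _).symm
      rw [h2] at h
      rw [two_mul, add_smul]
      exact h
    exact this
  have hV : HasFDerivAt (fun y => θ y ^ μ * gradSq θ y * pder i θ y)
      ((θ x ^ μ * gradSq θ x) • fderiv ℝ (pder i θ) x
        + pder i θ x • (θ x ^ μ • (∑ j, (2 * pder j θ x) • fderiv ℝ (pder j θ) x)
          + gradSq θ x • ((μ * θ x ^ (μ - 1)) • fderiv ℝ θ x))) x := (hr.mul hGd).mul (hPj i)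
  rw [← pder_def, hV.fderiv]
  simp only [ContinuousLinearMap.add_apply, ContinuousLinearMap.coe_smul', Pi.smul_apply,
    ContinuousLinearMap.coe_sum', Finset.sum_apply, smul_eq_mul, pder_def]
  ring

lemma div_sum (hsm : ContDiff ℝ (⊤ : ℕ∞) θ) (hpos : ∀ x, 0 < θ x) (μ : ℝ)
    (x : EuclideanSpace ℝ (Fin d)) :
    ∑ i, pder i (fun y => θ y ^ μ * gradSq θ y * pder i θ y) x
      = μ * (θ x ^ (μ - 1) * gradSq θ x ^ 2)
        + θ x ^ μ * (gradSq θ x * lap θ x)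
        + 2 * (θ x ^ μ * ∑ i, ∑ j, pder i θ x * pder j θ x * pder i (pder j θ) x) := by
  rw [Finset.sum_congr rfl fun i _ => pder_V hsm hpos μ i x]
  have h1 : ∑ i, ((θ x ^ μ * (∑ j, 2 * pder j θ x * pder i (pder j θ) x)
          + gradSq θ x * (μ * θ x ^ (μ - 1) * pder i θ x)) * pder i θ x
        + θ x ^ μ * gradSq θ x * pder i (pder i θ) x)
      = ∑ i, (θ x ^ μ * ∑ j, 2 * (pder i θ x * pder j θ x * pder i (pder j θ) x))
        + ∑ i, (μ * (θ x ^ (μ - 1) * gradSq θ x) * pder i θ x ^ 2)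
        + ∑ i, (θ x ^ μ * gradSq θ x * pder i (pder i θ) x) := by
    rw [← Finset.sum_add_distrib, ← Finset.sum_add_distrib]
    refine Finset.sum_congr rfl fun i _ => ?_
    simp only [add_mul, Finset.sum_mul, Finset.mul_sum]
    refine congrArg₂ (· + ·) (congrArg₂ (· + ·)
      (Finset.sum_congr rfl fun j _ => by ring) (by ring)) rfl
  rw [h1]
  have h2 : ∑ i, (θ x ^ μ * ∑ j, 2 * (pder i θ x * pder j θ x * pder i (pder j θ) x))
      = 2 * (θ x ^ μ * ∑ i, ∑ j, pder i θ x * pder j θ x * pder i (pder j θ) x) := by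
    simp only [Finset.mul_sum]
    refine Finset.sum_congr rfl fun i _ => ?_
    refine Finset.sum_congr rfl fun j _ => by ring
  have h3 : ∑ i, (μ * (θ x ^ (μ - 1) * gradSq θ x) * pder i θ x ^ 2)
      = μ * (θ x ^ (μ - 1) * gradSq θ x ^ 2) := by
    rw [← Finset.mul_sum]
    have : (∑ i, pder i θ x ^ 2) = gradSq θ x := rfl
    rw [this]; ring
  have h4 : ∑ i, (θ x ^ μ * gradSq θ x * pder i (pder i θ) x)
      = θ x ^ μ * (gradSq θ x * lap θ x) := by
    rw [← Finset.mul_sum]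
    have : (∑ i, pder i (pder i θ) x) = lap θ x := rfl
    rw [this]; ring
  rw [h2, h3, h4]
  ring

end PointwiseDeriv

theorem weighted_bernis_inequality (d : ℕ) (hd : 1 ≤ d) (μ : ℝ)
    (θ : EuclideanSpace ℝ (Fin d) → ℝ)
    (hsm : ContDiff ℝ (⊤ : ℕ∞) θ)
    (hpos : ∀ x, 0 < θ x)
    (hper : ZPeriodic θ) :
    (μ ^ 2 / 3) * ∫ x in fundDom d, θ x ^ (μ - 1) * (gradSq θ x) ^ 2
      ≤ (∫ x in fundDom d, θ x ^ (μ + 1) * (lap θ x) ^ 2)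
        + 2 * ∫ x in fundDom d, θ x ^ (μ + 1) * hessSq θ x := by
  obtain ⟨n, rfl⟩ : ∃ n, d = n + 1 := ⟨d - 1, (Nat.succ_pred_eq_of_pos hd).symm⟩
  classical
  set Q : EuclideanSpace ℝ (Fin (n + 1)) → ℝ :=
    fun x => ∑ i, ∑ j, pder i θ x * pder j θ x * pder i (pder j θ) x with hQdef
  set A := ∫ x in fundDom (n + 1), θ x ^ (μ - 1) * (gradSq θ x) ^ 2 with hA
  set B := ∫ x in fundDom (n + 1), θ x ^ (μ + 1) * (lap θ x) ^ 2 with hB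
  set C := ∫ x in fundDom (n + 1), θ x ^ (μ + 1) * hessSq θ x with hC
  -- continuity facts
  have hPc : ∀ j, Continuous (pder j θ) := fun j => (pder_contDiff hsm j).continuous
  have hP2c : ∀ i j, Continuous (pder i (pder j θ)) := fun i j =>
    (pder_contDiff (pder_contDiff hsm j) i).continuous
  have hrpowc : ∀ ν : ℝ, Continuous fun x => θ x ^ ν := fun ν =>
    (hsm.rpow_const_of_ne (fun x => (hpos x).ne')).continuous
  have hGc : Continuous (gradSq θ) := by
    have : gradSq θ = fun x => ∑ j, (pder j θ x) ^ 2 := rfl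
    rw [this]; exact continuous_finset_sum _ fun j _ => (hPc j).pow 2
  have hLc : Continuous (lap θ) := by
    have : lap θ = fun x => ∑ j, pder j (pder j θ) x := rfl
    rw [this]; exact continuous_finset_sum _ fun j _ => hP2c j j
  have hHc : Continuous (hessSq θ) := by
    have : hessSq θ = fun x => ∑ i, ∑ j, (pder i (pder j θ) x) ^ 2 := rfl
    rw [this]
    exact continuous_finset_sum _ fun i _ => continuous_finset_sum _ fun j _ => (hP2c i j).pow 2
  have hQc : Continuous Q :=
    continuous_finset_sum _ fun i _ => continuous_finset_sum _ fun j _ =>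
      ((hPc i).mul (hPc j)).mul (hP2c i j)
  -- smoothness and periodicity of the vector field
  have hGsm : ContDiff ℝ (⊤ : ℕ∞) (gradSq θ) := by
    have : gradSq θ = fun x => ∑ j, (pder j θ x) ^ 2 := rfl
    rw [this]; exact ContDiff.sum fun j _ => (pder_contDiff hsm j).pow 2
  have hVsm : ∀ i : Fin (n + 1),
      ContDiff ℝ (⊤ : ℕ∞) (fun y => θ y ^ μ * gradSq θ y * pder i θ y) := fun i =>
    ((hsm.rpow_const_of_ne (fun x => (hpos x).ne')).mul hGsm).mul (pder_contDiff hsm i)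
  have hGper : ZPeriodic (gradSq θ) := fun x k =>
    Finset.sum_congr rfl fun j _ => by rw [pder_periodic hsm hper j x k]
  have hVper : ∀ i : Fin (n + 1),
      ZPeriodic (fun y => θ y ^ μ * gradSq θ y * pder i θ y) := fun i x k => by
    simp only
    rw [hper x k, hGper x k, pder_periodic hsm hper i x k]
  -- integrability facts
  have hintA : IntegrableOn (fun x => θ x ^ (μ - 1) * (gradSq θ x) ^ 2) (fundDom (n + 1)) :=
    integrableOn_fundDom ((hrpowc _).mul (hGc.pow 2))
  have hintB : IntegrableOn (fun x => θ x ^ (μ + 1) * (lap θ x) ^ 2) (fundDom (n + 1)) :=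
    integrableOn_fundDom ((hrpowc _).mul (hLc.pow 2))
  have hintC : IntegrableOn (fun x => θ x ^ (μ + 1) * hessSq θ x) (fundDom (n + 1)) :=
    integrableOn_fundDom ((hrpowc _).mul hHc)
  have hint2 : IntegrableOn (fun x => θ x ^ μ * (gradSq θ x * lap θ x)) (fundDom (n + 1)) :=
    integrableOn_fundDom ((hrpowc _).mul (hGc.mul hLc))
  have hint3 : IntegrableOn (fun x => 2 * (θ x ^ μ * Q x)) (fundDom (n + 1)) :=
    integrableOn_fundDom (continuous_const.mul ((hrpowc _).mul hQc))
  have hint1 : IntegrableOn (fun x => μ * (θ x ^ (μ - 1) * (gradSq θ x) ^ 2)) (fundDom (n + 1)) :=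
    integrableOn_fundDom (continuous_const.mul ((hrpowc _).mul (hGc.pow 2)))
  -- the divergence integral vanishes
  have hzero : ∫ x in fundDom (n + 1),
      (μ * (θ x ^ (μ - 1) * gradSq θ x ^ 2) + θ x ^ μ * (gradSq θ x * lap θ x)
        + 2 * (θ x ^ μ * Q x)) = 0 := by
    have hfe : (fun x => μ * (θ x ^ (μ - 1) * gradSq θ x ^ 2)
          + θ x ^ μ * (gradSq θ x * lap θ x) + 2 * (θ x ^ μ * Q x))
        = fun x => ∑ i, pder i (fun y => θ y ^ μ * gradSq θ y * pder i θ y) x :=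
      funext fun x => (div_sum hsm hpos μ x).symm
    rw [hfe, integral_finset_sum _ fun i _ =>
      integrableOn_fundDom (pder_contDiff (hVsm i) i).continuous]
    exact Finset.sum_eq_zero fun i _ => integral_pder_eq_zero i (hVsm i) (hVper i)
  -- split the integral
  have hsplit : μ * A + (∫ x in fundDom (n + 1), θ x ^ μ * (gradSq θ x * lap θ x))
      + (∫ x in fundDom (n + 1), 2 * (θ x ^ μ * Q x)) = 0 := by
    have hint12 : IntegrableOn (fun x => μ * (θ x ^ (μ - 1) * gradSq θ x ^ 2)
        + θ x ^ μ * (gradSq θ x * lap θ x)) (fundDom (n + 1)) :=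
      integrableOn_fundDom ((continuous_const.mul ((hrpowc _).mul (hGc.pow 2))).add
        ((hrpowc _).mul (hGc.mul hLc)))
    have h := hzero
    rw [integral_add hint12 hint3, integral_add hint1 hint2,
      integral_const_mul] at h
    rw [hA]
    exact h
  -- nonnegativity
  have hA0 : 0 ≤ A := integral_nonneg fun x =>
    mul_nonneg (rpow_nonneg (hpos x).le _) (sq_nonneg _)
  have hB0 : 0 ≤ B := integral_nonneg fun x =>
    mul_nonneg (rpow_nonneg (hpos x).le _) (sq_nonneg _)
  have hG0 : ∀ x, 0 ≤ gradSq θ x := fun x =>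
    Finset.sum_nonneg fun j _ => sq_nonneg _
  have hH0 : ∀ x, 0 ≤ hessSq θ x := fun x =>
    Finset.sum_nonneg fun i _ => Finset.sum_nonneg fun j _ => sq_nonneg _
  have hC0 : 0 ≤ C := integral_nonneg fun x =>
    mul_nonneg (rpow_nonneg (hpos x).le _) (hH0 x)
  by_cases hμ : μ = 0
  · subst hμ
    norm_num
    linarith [hB0, hC0]
  · set m := |μ| with hm'
    have hm : 0 < m := abs_pos.2 hμ
    have hqsq : ∀ x, Q x ^ 2 ≤ (gradSq θ x) ^ 2 * hessSq θ x := fun x =>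
      Qsq_le (fun i => pder i θ x) (fun i j => pder i (pder j θ) x)
    have hpt : ∀ x, m * |θ x ^ μ * (gradSq θ x * lap θ x) + 2 * (θ x ^ μ * Q x)| ≤
        m ^ 2 / 2 * (θ x ^ (μ - 1) * (gradSq θ x) ^ 2)
          + 3 / 2 * (θ x ^ (μ + 1) * (lap θ x) ^ 2)
          + 3 * (θ x ^ (μ + 1) * hessSq θ x) := fun x =>
      young_bound (hpos x) (hG0 x) (hH0 x) hm (hqsq x)
    -- |∫ (f₂ + f₃)| = m * A
    have hcomb : ∫ x in fundDom (n + 1),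
        (θ x ^ μ * (gradSq θ x * lap θ x) + 2 * (θ x ^ μ * Q x)) = -(μ * A) := by
      rw [integral_add hint2 hint3]
      linarith [hsplit]
    have habs : m * A ≤ ∫ x in fundDom (n + 1),
        |θ x ^ μ * (gradSq θ x * lap θ x) + 2 * (θ x ^ μ * Q x)| := by
      have h1 := norm_integral_le_integral_norm (μ := volume.restrict (fundDom (n + 1)))
        (f := fun x => θ x ^ μ * (gradSq θ x * lap θ x) + 2 * (θ x ^ μ * Q x))
      rw [hcomb] at h1
      simp only [Real.norm_eq_abs, abs_neg, abs_mul, abs_of_nonneg hA0] at h1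
      exact h1
    have hmono : ∫ x in fundDom (n + 1),
        m * |θ x ^ μ * (gradSq θ x * lap θ x) + 2 * (θ x ^ μ * Q x)|
        ≤ ∫ x in fundDom (n + 1),
          (m ^ 2 / 2 * (θ x ^ (μ - 1) * (gradSq θ x) ^ 2)
            + 3 / 2 * (θ x ^ (μ + 1) * (lap θ x) ^ 2)
            + 3 * (θ x ^ (μ + 1) * hessSq θ x)) := by
      refine integral_mono (((hint2.add hint3).abs).const_mul m) ?_ hpt
      exact ((hintA.const_mul (m ^ 2 / 2)).add (hintB.const_mul (3 / 2))).add
        (hintC.const_mul 3)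
    have hrhs : ∫ x in fundDom (n + 1),
        (m ^ 2 / 2 * (θ x ^ (μ - 1) * (gradSq θ x) ^ 2)
          + 3 / 2 * (θ x ^ (μ + 1) * (lap θ x) ^ 2)
          + 3 * (θ x ^ (μ + 1) * hessSq θ x))
        = m ^ 2 / 2 * A + 3 / 2 * B + 3 * C := by
      have hintAB : IntegrableOn (fun x => m ^ 2 / 2 * (θ x ^ (μ - 1) * (gradSq θ x) ^ 2)
          + 3 / 2 * (θ x ^ (μ + 1) * (lap θ x) ^ 2)) (fundDom (n + 1)) :=
        integrableOn_fundDom ((continuous_const.mul ((hrpowc _).mul (hGc.pow 2))).add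
          (continuous_const.mul ((hrpowc _).mul (hLc.pow 2))))
      rw [integral_add hintAB (hintC.const_mul 3),
        integral_add (hintA.const_mul (m ^ 2 / 2)) (hintB.const_mul (3 / 2)),
        integral_const_mul, integral_const_mul, integral_const_mul]
    have hfinal : m * (m * A) ≤ m ^ 2 / 2 * A + 3 / 2 * B + 3 * C := by
      calc m * (m * A) ≤ m * ∫ x in fundDom (n + 1),
            |θ x ^ μ * (gradSq θ x * lap θ x) + 2 * (θ x ^ μ * Q x)| :=
          mul_le_mul_of_nonneg_left habs hm.le
        _ = ∫ x in fundDom (n + 1),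
            m * |θ x ^ μ * (gradSq θ x * lap θ x) + 2 * (θ x ^ μ * Q x)| :=
          (integral_const_mul m _).symm
        _ ≤ _ := hmono
        _ = _ := hrhs
    have hμ2 : μ ^ 2 = m ^ 2 := (sq_abs μ).symm
    rw [hμ2]
    nlinarith [hfinal, hB0, hC0]
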